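/- Let n > 1, let U ⊂ ℝⁿ be a nonempty open O(n)-invariant set, I = {|x|² : x ∈ U}, and let θ : I → (0,∞) be of class C². Set ρ(x+iy) = |y|² − θ(|x|²) and Σ = {x+iy : x ∈ U, |y|² = θ(|x|²)}. Then L_ρ(p;v) > 0 for every p ∈ Σ and every nonzero v ∈ T_p^ℂΣ (i.e. the domain D₋ = {x+iy : x ∈ U, |y|² < θ(|x|²)} is strongly pseudoconvex along Σ) if and only if for every s ∈ I one has θ'(s) < 1 and 2 s θ(s) θ''(s) < (1 − θ'(s)) (s θ'(s)² + θ(s)). -/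

import Mathlib

open Complex Set

/-- The Levi form of a `C²` function `ρ` at `p` in direction `v`:
`4 L_ρ(p;v) = H_p(v,v) + H_p(iv,iv)` where `H_p` is the second real Fréchet derivative. -/
noncomputable def leviForm {E : Type*} [NormedAddCommGroup E] [NormedSpace ℂ E]
    (ρ : E → ℝ) (p v : E) : ℝ :=
  (iteratedFDeriv ℝ 2 ρ p ![v, v]
    + iteratedFDeriv ℝ 2 ρ p ![Complex.I • v, Complex.I • v]) / 4

/-- The complex tangent space `T_p^ℂΣ = {v : dρ_p(v) = 0 and dρ_p(iv) = 0}`. -/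
def complexTangent {E : Type*} [NormedAddCommGroup E] [NormedSpace ℂ E]
    (ρ : E → ℝ) (p : E) : Set E :=
  {v | fderiv ℝ ρ p v = 0 ∧ fderiv ℝ ρ p (Complex.I • v) = 0}

/-- `ρ(x+iy) = |y|² - θ(|x|²)`. -/
noncomputable def rho (n : ℕ) (θ : ℝ → ℝ) : (Fin n → ℂ) → ℝ :=
  fun z => (∑ j, (z j).im ^ 2) - θ (∑ j, (z j).re ^ 2)

/-- The hypersurface `Σ = {x+iy : x ∈ U, |y|² = θ(|x|²)}`. -/
def SigmaSet (n : ℕ) (U : Set (Fin n → ℝ)) (θ : ℝ → ℝ) : Set (Fin n → ℂ) :=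
  {z | (fun j => (z j).re) ∈ U ∧ (∑ j, (z j).im ^ 2) = θ (∑ j, (z j).re ^ 2)}

/-! ### Auxiliary material -/

section Aux

lemma sum_single' {M : Type*} [AddCommMonoid M] {n : ℕ} (j0 : Fin n) (f : Fin n → M)
    (hf : ∀ j, j ≠ j0 → f j = 0) : ∑ j, f j = f j0 :=
  Finset.sum_eq_single j0 (fun b _ hb => hf b hb) (fun h => absurd (Finset.mem_univ j0) h)

/-- Gram determinant inequality for three vectors in `ℝⁿ`. -/
lemma gram_nonneg {n : ℕ} (x y a : Fin n → ℝ) :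
    0 ≤ (∑ j, x j ^ 2) * (∑ j, y j ^ 2) * (∑ j, a j ^ 2)
        - (∑ j, x j ^ 2) * (∑ j, y j * a j) ^ 2
        - (∑ j, y j ^ 2) * (∑ j, x j * a j) ^ 2
        - (∑ j, a j ^ 2) * (∑ j, x j * y j) ^ 2
        + 2 * (∑ j, x j * y j) * (∑ j, x j * a j) * (∑ j, y j * a j) := by
  set s := ∑ j, x j ^ 2 with hs
  set t := ∑ j, y j ^ 2 with ht
  set A := ∑ j, a j ^ 2 with hA
  set c := ∑ j, x j * y j with hc
  set P := ∑ j, x j * a j with hP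
  set w := ∑ j, y j * a j with hw
  have hs0 : 0 ≤ s := Finset.sum_nonneg fun j _ => sq_nonneg _
  rcases eq_or_lt_of_le hs0 with h0 | hpos
  · have hx : ∀ j ∈ Finset.univ, x j ^ 2 = 0 := by
      intro j hj
      exact (Finset.sum_eq_zero_iff_of_nonneg (fun j _ => sq_nonneg (x j))).1 h0.symm j hj
    have hx' : ∀ j, x j = 0 := fun j => by
      have := hx j (Finset.mem_univ j); exact pow_eq_zero_iff (by norm_num) |>.1 this
    have hc0 : c = 0 := by rw [hc]; exact Finset.sum_eq_zero fun j _ => by rw [hx' j]; ring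
    have hP0 : P = 0 := by rw [hP]; exact Finset.sum_eq_zero fun j _ => by rw [hx' j]; ring
    rw [← h0, hc0, hP0]; ring_nf; positivity
  · set Y : Fin n → ℝ := fun j => y j - (c / s) * x j with hY
    set B : Fin n → ℝ := fun j => a j - (P / s) * x j with hB
    have e1 : (∑ j, Y j * B j) = w - c * P / s := by
      have : ∀ j, Y j * B j
          = y j * a j - (P/s) * (x j * y j) - (c/s) * (x j * a j) + (c/s)*(P/s) * (x j ^2) := by
        intro j; simp only [hY, hB]; ring
      rw [Finset.sum_congr rfl fun j _ => this j]
      rw [Finset.sum_add_distrib, Finset.sum_sub_distrib, Finset.sum_sub_distrib,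
        ← Finset.mul_sum, ← Finset.mul_sum, ← Finset.mul_sum, ← hw, ← hc, ← hP, ← hs]
      field_simp; ring
    have e2 : (∑ j, Y j ^ 2) = t - c ^ 2 / s := by
      have : ∀ j, Y j ^ 2 = y j ^2 - (2*c/s) * (x j * y j) + (c/s)^2 * (x j ^2) := by
        intro j; simp only [hY]; ring
      rw [Finset.sum_congr rfl fun j _ => this j]
      rw [Finset.sum_add_distrib, Finset.sum_sub_distrib, ← Finset.mul_sum, ← Finset.mul_sum,
        ← ht, ← hc, ← hs]
      field_simp; ring
    have e3 : (∑ j, B j ^ 2) = A - P ^ 2 / s := by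
      have : ∀ j, B j ^ 2 = a j ^2 - (2*P/s) * (x j * a j) + (P/s)^2 * (x j ^2) := by
        intro j; simp only [hB]; ring
      rw [Finset.sum_congr rfl fun j _ => this j]
      rw [Finset.sum_add_distrib, Finset.sum_sub_distrib, ← Finset.mul_sum, ← Finset.mul_sum,
        ← hA, ← hP, ← hs]
      field_simp; ring
    have cs := Finset.sum_mul_sq_le_sq_mul_sq Finset.univ Y B
    rw [e1, e2, e3] at cs
    have h3 : s^2 * (w - c*P/s)^2 ≤ s^2 * ((t - c^2/s) * (A - P^2/s)) := by
      nlinarith [sq_nonneg s]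
    have e4 : s^2 * (w - c*P/s)^2 = (s*w - c*P)^2 := by field_simp
    have e5 : s^2 * ((t - c^2/s) * (A - P^2/s)) = (s*t - c^2) * (s*A - P^2) := by
      field_simp
    rw [e4, e5] at h3
    nlinarith [hpos]

variable {n : ℕ}

/-- `v ↦ (v j).re` as a continuous `ℝ`-linear map. -/
noncomputable def reproj (n : ℕ) (j : Fin n) : (Fin n → ℂ) →L[ℝ] ℝ :=
  Complex.reCLM.comp (ContinuousLinearMap.proj j)

noncomputable def improj (n : ℕ) (j : Fin n) : (Fin n → ℂ) →L[ℝ] ℝ :=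
  Complex.imCLM.comp (ContinuousLinearMap.proj j)

@[simp] lemma reproj_apply (j : Fin n) (z : Fin n → ℂ) : reproj n j z = (z j).re := rfl
@[simp] lemma improj_apply (j : Fin n) (z : Fin n → ℂ) : improj n j z = (z j).im := rfl

noncomputable def Cmap (n : ℕ) : (Fin n → ℂ) →L[ℝ] ((Fin n → ℂ) →L[ℝ] ℝ) :=
  ∑ j, (2:ℝ) • ((reproj n j).smulRight (reproj n j))

noncomputable def Bmap (n : ℕ) : (Fin n → ℂ) →L[ℝ] ((Fin n → ℂ) →L[ℝ] ℝ) :=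
  ∑ j, (2:ℝ) • ((improj n j).smulRight (improj n j))

lemma Cmap_apply (z w : Fin n → ℂ) : Cmap n z w = 2 * ∑ j, (z j).re * (w j).re := by
  simp [Cmap, ContinuousLinearMap.sum_apply, Finset.mul_sum]

lemma Bmap_apply (z w : Fin n → ℂ) : Bmap n z w = 2 * ∑ j, (z j).im * (w j).im := by
  simp [Bmap, ContinuousLinearMap.sum_apply, Finset.mul_sum]

noncomputable def Sq (n : ℕ) : (Fin n → ℂ) → ℝ := fun z => ∑ j, (z j).re ^ 2

noncomputable def Phi (n : ℕ) (θ : ℝ → ℝ) (z : Fin n → ℂ) : (Fin n → ℂ) →L[ℝ] ℝ :=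
  Bmap n z - deriv θ (Sq n z) • Cmap n z

lemma hasFDerivAt_Sq (z : Fin n → ℂ) : HasFDerivAt (Sq n) (Cmap n z) z := by
  have h : ∀ j : Fin n, HasFDerivAt (fun z : Fin n → ℂ => (z j).re ^ 2)
      ((2:ℝ) • (((reproj n j).smulRight (reproj n j)) z)) z := by
    intro j
    have h1 : HasFDerivAt (fun z : Fin n → ℂ => (z j).re) (reproj n j) z :=
      (reproj n j).hasFDerivAt
    have h2 : HasFDerivAt (fun z : Fin n → ℂ => (z j).re * (z j).re)
        ((z j).re • reproj n j + (z j).re • reproj n j) z := h1.mul h1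
    have h3 : ((2:ℝ) • (((reproj n j).smulRight (reproj n j)) z))
        = (z j).re • reproj n j + (z j).re • reproj n j := by
      ext w; simp [ContinuousLinearMap.smulRight_apply]; ring
    rw [h3]
    simpa [pow_two] using h2
  have hsum := HasFDerivAt.fun_sum (fun j (_ : j ∈ Finset.univ) => h j)
  have heq : (∑ j, (2:ℝ) • (((reproj n j).smulRight (reproj n j)) z)) = Cmap n z := by
    simp [Cmap, ContinuousLinearMap.sum_apply]
  rw [heq] at hsum
  exact hsum

lemma hasFDerivAt_Qsum (z : Fin n → ℂ) :
    HasFDerivAt (fun z : Fin n → ℂ => ∑ j, (z j).im ^ 2) (Bmap n z) z := by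
  have h : ∀ j : Fin n, HasFDerivAt (fun z : Fin n → ℂ => (z j).im ^ 2)
      ((2:ℝ) • (((improj n j).smulRight (improj n j)) z)) z := by
    intro j
    have h1 : HasFDerivAt (fun z : Fin n → ℂ => (z j).im) (improj n j) z :=
      (improj n j).hasFDerivAt
    have h2 : HasFDerivAt (fun z : Fin n → ℂ => (z j).im * (z j).im)
        ((z j).im • improj n j + (z j).im • improj n j) z := h1.mul h1
    have h3 : ((2:ℝ) • (((improj n j).smulRight (improj n j)) z))
        = (z j).im • improj n j + (z j).im • improj n j := by
      ext w; simp [ContinuousLinearMap.smulRight_apply]; ring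
    rw [h3]
    simpa [pow_two] using h2
  have hsum := HasFDerivAt.fun_sum (fun j (_ : j ∈ Finset.univ) => h j)
  have heq : (∑ j, (2:ℝ) • (((improj n j).smulRight (improj n j)) z)) = Bmap n z := by
    simp [Bmap, ContinuousLinearMap.sum_apply]
  rw [heq] at hsum
  exact hsum

section calc1
variable {θ : ℝ → ℝ} {V : Set ℝ} (hV : IsOpen V) (hθ : ContDiffOn ℝ 2 θ V)

include hV hθ

lemma theta_hasDerivAt {s : ℝ} (hs : s ∈ V) : HasDerivAt θ (deriv θ s) s := by
  have h1 : DifferentiableAt ℝ θ s :=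
    ((hθ.differentiableOn (by norm_num)).differentiableAt (hV.mem_nhds hs))
  exact h1.hasDerivAt

lemma dtheta_hasDerivAt {s : ℝ} (hs : s ∈ V) :
    HasDerivAt (deriv θ) (deriv (deriv θ) s) s := by
  have h0 : ContDiffOn ℝ 1 (deriv θ) V := hθ.deriv_of_isOpen hV (by norm_num)
  have h1 : DifferentiableAt ℝ (deriv θ) s :=
    ((h0.differentiableOn (by norm_num)).differentiableAt (hV.mem_nhds hs))
  exact h1.hasDerivAt

lemma hasFDerivAt_rho {z : Fin n → ℂ} (hz : Sq n z ∈ V) :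
    HasFDerivAt (rho n θ) (Phi n θ z) z := by
  have h2 : HasFDerivAt (fun z : Fin n → ℂ => θ (Sq n z))
      (deriv θ (Sq n z) • Cmap n z) z :=
    (theta_hasDerivAt hV hθ hz).comp_hasFDerivAt z (hasFDerivAt_Sq z)
  exact (hasFDerivAt_Qsum z).sub h2

lemma fderiv_rho_eq {z : Fin n → ℂ} (hz : Sq n z ∈ V) :
    fderiv ℝ (rho n θ) z = Phi n θ z := (hasFDerivAt_rho hV hθ hz).fderiv

lemma fderiv_fderiv_rho {p : Fin n → ℂ} (hp : Sq n p ∈ V) :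
    fderiv ℝ (fderiv ℝ (rho n θ)) p
      = Bmap n - (deriv θ (Sq n p) • Cmap n
          + ((deriv (deriv θ) (Sq n p)) • (Cmap n p)).smulRight (Cmap n p)) := by
  have hScont : Continuous (Sq n) := by
    apply continuous_finset_sum
    intro j _
    exact (Complex.continuous_re.comp (continuous_apply j)).pow 2
  have hopen : IsOpen {z : Fin n → ℂ | Sq n z ∈ V} := hV.preimage hScont
  have hEv : fderiv ℝ (rho n θ) =ᶠ[nhds p] Phi n θ := by
    filter_upwards [hopen.mem_nhds hp] with z hz
    exact fderiv_rho_eq hV hθ hz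
  rw [hEv.fderiv_eq]
  have hg : HasFDerivAt (fun z : Fin n → ℂ => deriv θ (Sq n z))
      ((deriv (deriv θ) (Sq n p)) • Cmap n p) p :=
    (dtheta_hasDerivAt hV hθ hp).comp_hasFDerivAt p (hasFDerivAt_Sq p)
  have hsmul : HasFDerivAt (fun z : Fin n → ℂ => deriv θ (Sq n z) • Cmap n z)
      (deriv θ (Sq n p) • Cmap n
        + ((deriv (deriv θ) (Sq n p)) • (Cmap n p)).smulRight (Cmap n p)) p :=
    hg.smul (Cmap n).hasFDerivAt
  exact ((Bmap n).hasFDerivAt.sub hsmul).fderiv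

lemma iterated_two_eval {p v w : Fin n → ℂ} (hp : Sq n p ∈ V) :
    iteratedFDeriv ℝ 2 (rho n θ) p ![v, w]
      = 2 * (∑ j, (v j).im * (w j).im)
        - deriv θ (Sq n p) * (2 * ∑ j, (v j).re * (w j).re)
        - deriv (deriv θ) (Sq n p) * (2 * ∑ j, (p j).re * (v j).re)
            * (2 * ∑ j, (p j).re * (w j).re) := by
  rw [iteratedFDeriv_two_apply, fderiv_fderiv_rho hV hθ hp]
  simp [ContinuousLinearMap.sub_apply, ContinuousLinearMap.add_apply,
    ContinuousLinearMap.smul_apply, ContinuousLinearMap.smulRight_apply,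
    Bmap_apply, Cmap_apply, smul_eq_mul]
  ring

lemma levi_eval {p v : Fin n → ℂ} (hp : Sq n p ∈ V) :
    leviForm (rho n θ) p v
      = (1 - deriv θ (Sq n p)) * ((∑ j, (v j).re ^ 2) + (∑ j, (v j).im ^ 2)) / 2
        - deriv (deriv θ) (Sq n p)
            * ((∑ j, (p j).re * (v j).re) ^ 2 + (∑ j, (p j).re * (v j).im) ^ 2) := by
  have hIv : ∀ j, ((Complex.I • v) j).re = -(v j).im ∧ ((Complex.I • v) j).im = (v j).re := by
    intro j; constructor <;> simp [Pi.smul_apply, smul_eq_mul, Complex.mul_re, Complex.mul_im]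
  rw [leviForm, iterated_two_eval hV hθ hp, iterated_two_eval hV hθ hp]
  have e1 : (∑ j, ((Complex.I • v) j).im * ((Complex.I • v) j).im) = ∑ j, (v j).re * (v j).re :=
    Finset.sum_congr rfl fun j _ => by rw [(hIv j).2]
  have e2 : (∑ j, ((Complex.I • v) j).re * ((Complex.I • v) j).re)
      = ∑ j, (v j).im * (v j).im := Finset.sum_congr rfl fun j _ => by rw [(hIv j).1]; ring
  have e3 : (∑ j, (p j).re * ((Complex.I • v) j).re) = -∑ j, (p j).re * (v j).im := by
    rw [← Finset.sum_neg_distrib]; exact Finset.sum_congr rfl fun j _ => by rw [(hIv j).1]; ring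
  have e4 : (∑ j, (v j).re ^ 2) = ∑ j, (v j).re * (v j).re :=
    Finset.sum_congr rfl fun j _ => sq (v j).re
  have e5 : (∑ j, (v j).im ^ 2) = ∑ j, (v j).im * (v j).im :=
    Finset.sum_congr rfl fun j _ => sq (v j).im
  rw [e1, e2, e3, e4, e5]
  ring

lemma tangent_iff {p v : Fin n → ℂ} (hp : Sq n p ∈ V) :
    v ∈ complexTangent (rho n θ) p ↔
      ((∑ j, (p j).im * (v j).im) = deriv θ (Sq n p) * (∑ j, (p j).re * (v j).re)
        ∧ (∑ j, (p j).im * (v j).re) = -(deriv θ (Sq n p) * (∑ j, (p j).re * (v j).im))) := by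
  have hIv : ∀ j, ((Complex.I • v) j).re = -(v j).im ∧ ((Complex.I • v) j).im = (v j).re := by
    intro j; constructor <;> simp [Pi.smul_apply, smul_eq_mul, Complex.mul_re, Complex.mul_im]
  rw [complexTangent, Set.mem_setOf_eq, fderiv_rho_eq hV hθ hp]
  simp only [Phi, ContinuousLinearMap.sub_apply, ContinuousLinearMap.smul_apply,
    Bmap_apply, Cmap_apply, smul_eq_mul]
  have e1 : (∑ j, (p j).im * ((Complex.I • v) j).im) = ∑ j, (p j).im * (v j).re :=
    Finset.sum_congr rfl fun j _ => by rw [(hIv j).2]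
  have e2 : (∑ j, (p j).re * ((Complex.I • v) j).re) = -∑ j, (p j).re * (v j).im := by
    rw [← Finset.sum_neg_distrib]; exact Finset.sum_congr rfl fun j _ => by rw [(hIv j).1]; ring
  rw [e1, e2]
  constructor
  · rintro ⟨h1, h2⟩; constructor <;> linarith
  · rintro ⟨h1, h2⟩; constructor <;> linarith

end calc1

end Aux

set_option maxHeartbeats 1000000

theorem stmt_0 {n : ℕ} (hn : 1 < n)
    (U : Set (Fin n → ℝ)) (hUne : U.Nonempty) (hUopen : IsOpen U)
    (hUinv : ∀ x x' : Fin n → ℝ, x ∈ U → (∑ j, x' j ^ 2) = (∑ j, x j ^ 2) → x' ∈ U)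
    (θ : ℝ → ℝ) (V : Set ℝ) (hV : IsOpen V)
    (hIV : {s : ℝ | ∃ x ∈ U, s = ∑ j, x j ^ 2} ⊆ V)
    (hθ : ContDiffOn ℝ 2 θ V)
    (hθpos : ∀ s ∈ {s : ℝ | ∃ x ∈ U, s = ∑ j, x j ^ 2}, 0 < θ s) :
    (∀ p ∈ SigmaSet n U θ, ∀ v ∈ complexTangent (rho n θ) p, v ≠ 0 →
        0 < leviForm (rho n θ) p v)
    ↔ (∀ s ∈ {s : ℝ | ∃ x ∈ U, s = ∑ j, x j ^ 2},
        deriv θ s < 1 ∧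
        2 * s * θ s * deriv (deriv θ) s <
          (1 - deriv θ s) * (s * (deriv θ s) ^ 2 + θ s)) := by
  constructor
  · -- strong pseudoconvexity implies the differential inequalities
    intro h s hs
    obtain ⟨x₀, hx₀U, hseq⟩ := hs
    have hsI : s ∈ {s : ℝ | ∃ x ∈ U, s = ∑ j, x j ^ 2} := ⟨x₀, hx₀U, hseq⟩
    have hsV : s ∈ V := hIV hsI
    have ht : 0 < θ s := hθpos s hsI
    have hs0 : 0 ≤ s := hseq ▸ Finset.sum_nonneg fun j _ => sq_nonneg _
    set rs := Real.sqrt s with hrsdef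
    set rt := Real.sqrt (θ s) with hrtdef
    have hrs : rs ^ 2 = s := Real.sq_sqrt hs0
    have hrt : rt ^ 2 = θ s := Real.sq_sqrt ht.le
    have hrtpos : 0 < rt := Real.sqrt_pos.2 ht
    set j0 : Fin n := ⟨0, by omega⟩ with hj0def
    set j1 : Fin n := ⟨1, by omega⟩ with hj1def
    have hj01 : j0 ≠ j1 := by simp [hj0def, hj1def, Fin.ext_iff]
    set x' : Fin n → ℝ := fun j => if j = j0 then rs else 0 with hx'def
    have hx's : (∑ j, x' j ^ 2) = s := by
      rw [sum_single' j0 _ (fun j hj => by simp [hx'def, hj])]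
      simp [hx'def, hrs]
    have hx'U : x' ∈ U := hUinv x₀ x' hx₀U (hx's.trans hseq)
    constructor
    · -- first claim: θ' s < 1
      set y1 : Fin n → ℝ := fun j => if j = j0 then rt else 0 with hy1def
      set p₁ : Fin n → ℂ := fun j => ⟨x' j, y1 j⟩ with hp₁def
      have hre1 : ∀ j, (p₁ j).re = x' j := fun j => rfl
      have him1 : ∀ j, (p₁ j).im = y1 j := fun j => rfl
      have hSq1 : (∑ j, (p₁ j).re ^ 2) = s := hx's
      have hy1s : (∑ j, (p₁ j).im ^ 2) = θ s := by
        rw [sum_single' j0 _ (fun j hj => by simp [him1, hy1def, hj])]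
        simp [him1, hy1def, hrt]
      have hp₁mem : p₁ ∈ SigmaSet n U θ := by
        refine ⟨hx'U, ?_⟩
        rw [hy1s, hSq1]
      have hSqV : Sq n p₁ ∈ V := by
        have : Sq n p₁ = s := hSq1
        rw [this]; exact hsV
      set v₁ : Fin n → ℂ := fun j => ⟨if j = j1 then 1 else 0, 0⟩ with hv₁def
      have hv₁ne : v₁ ≠ 0 := by
        intro hcon
        have := congrFun hcon j1
        rw [hv₁def] at this
        simp [Complex.ext_iff] at this
      have S1 : (∑ j, (p₁ j).im * (v₁ j).im) = 0 :=
        Finset.sum_eq_zero fun j _ => by simp [hv₁def]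
      have S2 : (∑ j, (p₁ j).re * (v₁ j).re) = 0 := by
        refine Finset.sum_eq_zero fun j _ => ?_
        by_cases hj : j = j0
        · have hj' : j ≠ j1 := fun hh => hj01 (hj.symm.trans hh)
          simp [hre1, hx'def, hv₁def, hj, hj', hj01]
        · simp [hre1, hx'def, hv₁def, hj]
      have S3 : (∑ j, (p₁ j).im * (v₁ j).re) = 0 := by
        refine Finset.sum_eq_zero fun j _ => ?_
        by_cases hj : j = j0
        · have hj' : j ≠ j1 := fun hh => hj01 (hj.symm.trans hh)
          simp [him1, hy1def, hv₁def, hj, hj', hj01]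
        · simp [him1, hy1def, hv₁def, hj]
      have S4 : (∑ j, (p₁ j).re * (v₁ j).im) = 0 :=
        Finset.sum_eq_zero fun j _ => by simp [hv₁def]
      have hv₁tan : v₁ ∈ complexTangent (rho n θ) p₁ := by
        rw [tangent_iff hV hθ hSqV]
        constructor
        · rw [S1, S2]; ring
        · rw [S3, S4]; ring
      have hL := h p₁ hp₁mem v₁ hv₁tan hv₁ne
      rw [levi_eval hV hθ hSqV] at hL
      have hre2 : (∑ j, (v₁ j).re ^ 2) = 1 := by
        rw [sum_single' j1 _ (fun j hj => by simp [hv₁def, hj])]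
        simp [hv₁def]
      have him2 : (∑ j, (v₁ j).im ^ 2) = 0 :=
        Finset.sum_eq_zero fun j _ => by simp [hv₁def]
      rw [hre2, him2, S2, S4, show Sq n p₁ = s from hSq1] at hL
      nlinarith [hL]
    · -- second claim
      set y2 : Fin n → ℝ := fun j => if j = j1 then rt else 0 with hy2def
      set p₂ : Fin n → ℂ := fun j => ⟨x' j, y2 j⟩ with hp₂def
      have hre1 : ∀ j, (p₂ j).re = x' j := fun j => rfl
      have him1 : ∀ j, (p₂ j).im = y2 j := fun j => rfl
      have hSq2 : (∑ j, (p₂ j).re ^ 2) = s := hx's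
      have hy2s : (∑ j, (p₂ j).im ^ 2) = θ s := by
        rw [sum_single' j1 _ (fun j hj => by simp [him1, hy2def, hj])]
        simp [him1, hy2def, hrt]
      have hp₂mem : p₂ ∈ SigmaSet n U θ := by
        refine ⟨hx'U, ?_⟩
        rw [hy2s, hSq2]
      have hSqV : Sq n p₂ ∈ V := by
        have : Sq n p₂ = s := hSq2
        rw [this]; exact hsV
      set c₁ : ℝ := deriv θ s * rs / rt with hc₁def
      set v₂ : Fin n → ℂ := fun j => ⟨if j = j0 then 1 else 0, if j = j1 then c₁ else 0⟩
        with hv₂def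
      have hv₂ne : v₂ ≠ 0 := by
        intro hcon
        have := congrFun hcon j0
        rw [hv₂def] at this
        simp [Complex.ext_iff] at this
      have T1 : (∑ j, (p₂ j).im * (v₂ j).im) = rt * c₁ := by
        rw [sum_single' j1 _ (fun j hj => by simp [him1, hy2def, hv₂def, hj])]
        simp [him1, hy2def, hv₂def]
      have T2 : (∑ j, (p₂ j).re * (v₂ j).re) = rs := by
        rw [sum_single' j0 _ (fun j hj => by simp [hre1, hx'def, hv₂def, hj])]
        simp [hre1, hx'def, hv₂def]
      have T3 : (∑ j, (p₂ j).im * (v₂ j).re) = 0 := by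
        refine Finset.sum_eq_zero fun j _ => ?_
        by_cases hj : j = j1
        · have hj' : j ≠ j0 := fun hh => hj01 (hh.symm.trans hj)
          simp [him1, hy2def, hv₂def, hj, hj', hj01, Ne.symm hj01]
        · simp [him1, hy2def, hv₂def, hj]
      have T4 : (∑ j, (p₂ j).re * (v₂ j).im) = 0 := by
        refine Finset.sum_eq_zero fun j _ => ?_
        by_cases hj : j = j0
        · have hj' : j ≠ j1 := fun hh => hj01 (hj.symm.trans hh)
          simp [hre1, hx'def, hv₂def, hj, hj', hj01, Ne.symm hj01]
        · simp [hre1, hx'def, hv₂def, hj]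
      have hv₂tan : v₂ ∈ complexTangent (rho n θ) p₂ := by
        rw [tangent_iff hV hθ hSqV]
        rw [show Sq n p₂ = s from hSq2]
        constructor
        · rw [T1, T2, hc₁def]
          field_simp
        · rw [T3, T4]; ring
      have hL := h p₂ hp₂mem v₂ hv₂tan hv₂ne
      rw [levi_eval hV hθ hSqV] at hL
      have hre2 : (∑ j, (v₂ j).re ^ 2) = 1 := by
        rw [sum_single' j0 _ (fun j hj => by simp [hv₂def, hj])]
        simp [hv₂def]
      have him2 : (∑ j, (v₂ j).im ^ 2) = c₁ ^ 2 := by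
        rw [sum_single' j1 _ (fun j hj => by simp [hv₂def, hj])]
        simp [hv₂def]
      rw [hre2, him2, T2, T4, show Sq n p₂ = s from hSq2] at hL
      -- hL : 0 < (1 - θ') * (1 + c₁²)/2 - θ'' * (rs² + 0²)
      have hcc : c₁ * rt = deriv θ s * rs := by
        rw [hc₁def]; field_simp
      have hcsq : c₁ ^ 2 * θ s = (deriv θ s) ^ 2 * s := by
        calc c₁ ^ 2 * θ s = (c₁ * rt) ^ 2 := by rw [← hrt]; ring
        _ = (deriv θ s * rs) ^ 2 := by rw [hcc]
        _ = (deriv θ s) ^ 2 * s := by rw [← hrs]; ring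
      rw [hrs] at hL
      have hstep : 0 < (1 - deriv θ s) * (θ s + c₁ ^ 2 * θ s)
          - 2 * deriv (deriv θ) s * s * θ s := by nlinarith [mul_pos ht hL]
      have hsub : (1 - deriv θ s) * (c₁ ^ 2 * θ s)
          = (1 - deriv θ s) * ((deriv θ s) ^ 2 * s) := by rw [hcsq]
      nlinarith [hstep, hsub]
  · -- the differential inequalities imply strong pseudoconvexity
    intro h p hp v hv hvne
    obtain ⟨hpU, hpS⟩ := hp
    have hsI : (∑ j, (p j).re ^ 2) ∈ {s : ℝ | ∃ x ∈ U, s = ∑ j, x j ^ 2} :=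
      ⟨fun j => (p j).re, hpU, rfl⟩
    have hsV : Sq n p ∈ V := hIV hsI
    have ht : 0 < θ (∑ j, (p j).re ^ 2) := hθpos _ hsI
    obtain ⟨h1, h2⟩ := h _ hsI
    have htan := (tangent_iff hV hθ hsV).1 hv
    have hLevi := levi_eval (v := v) hV hθ hsV
    rw [hLevi]
    simp only [Sq] at htan ⊢
    -- abbreviations as explicit hypotheses
    have hyb : (∑ j, (p j).im * (v j).im)
        = deriv θ (∑ j, (p j).re ^ 2) * (∑ j, (p j).re * (v j).re) := htan.1
    have hya : (∑ j, (p j).im * (v j).re)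
        = -(deriv θ (∑ j, (p j).re ^ 2) * (∑ j, (p j).re * (v j).im)) := htan.2
    have hyy : (∑ j, (p j).im ^ 2) = θ (∑ j, (p j).re ^ 2) := hpS
    have hm : 0 < (∑ j, (v j).re ^ 2) + (∑ j, (v j).im ^ 2) := by
      have hvj : ∃ j, v j ≠ 0 := by
        by_contra hcon
        push_neg at hcon
        exact hvne (funext hcon)
      obtain ⟨j, hj⟩ := hvj
      have hj2 : 0 < (v j).re ^ 2 + (v j).im ^ 2 := by
        rcases eq_or_ne (v j).re 0 with hre | hre
        · have him : (v j).im ≠ 0 := fun h0 => hj (by apply Complex.ext <;> simp [hre, h0])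
          nlinarith [pow_two_pos_of_ne_zero him, sq_nonneg (v j).re]
        · nlinarith [pow_two_pos_of_ne_zero hre, sq_nonneg (v j).im]
      have hle1 : (v j).re ^ 2 ≤ ∑ i, (v i).re ^ 2 :=
        Finset.single_le_sum (f := fun i => (v i).re ^ 2) (fun i _ => sq_nonneg _)
          (Finset.mem_univ j)
      have hle2 : (v j).im ^ 2 ≤ ∑ i, (v i).im ^ 2 :=
        Finset.single_le_sum (f := fun i => (v i).im ^ 2) (fun i _ => sq_nonneg _)
          (Finset.mem_univ j)
      linarith
    have hs0 : 0 ≤ ∑ j, (p j).re ^ 2 := Finset.sum_nonneg fun j _ => sq_nonneg _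
    have G1 := gram_nonneg (fun j => (p j).re) (fun j => (p j).im) (fun j => (v j).re)
    have G2 := gram_nonneg (fun j => (p j).re) (fun j => (p j).im) (fun j => (v j).im)
    rw [hyy, hya] at G1
    rw [hyy, hyb] at G2
    clear h hv htan hLevi hvne hsI hsV hpU hpS hyy hya hyb
    clear hIV hθpos hUinv hθ hV hUopen hUne
    set s := ∑ j, (p j).re ^ 2
    set t := θ s
    set t' := deriv θ s
    set t'' := deriv (deriv θ) s
    set P := ∑ j, (p j).re * (v j).re
    set Q := ∑ j, (p j).re * (v j).im
    set c := ∑ j, (p j).re * (p j).im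
    set ma := ∑ j, (v j).re ^ 2
    set mb := ∑ j, (v j).im ^ 2
    have key : (t + s * t' ^ 2) * (P ^ 2 + Q ^ 2) ≤ s * t * (ma + mb) := by
      linarith [G1, G2, mul_nonneg (sq_nonneg c) hm.le]
    have htpos : 0 < t + s * t' ^ 2 := by positivity
    rcases le_or_gt t'' 0 with hc2 | hc2
    · nlinarith [mul_nonneg (neg_nonneg.2 hc2) (add_nonneg (sq_nonneg P) (sq_nonneg Q)),
        mul_pos (sub_pos.2 h1) hm]
    · nlinarith [mul_le_mul_of_nonneg_left key hc2.le,
        mul_pos hm (sub_pos.2 h2), htpos, ht, hm]
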